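/- Let p be a prime and d ≥ 1. Then, as an equality of integers, (p·d) times the number of monic irreducible polynomials m ∈ (ZMod p)[X] of degree d with m.coeff (d−1) ≠ 0 equals (p−1) · Σ_{k ∣ d, p ∤ k} μ(k) · p^{d/k}, where the sum runs over the positive divisors k of d not divisible by p and μ is the Möbius function. -/

import Mathlib

open Polynomial Finset
private lemma sum_moeb (m : ℕ) (hm : m ≠ 0) :
    ∑ e ∈ m.divisors, (ArithmeticFunction.moebius e : ℤ) = if m = 1 then 1 else 0 := by
  have := congrArg (fun f => f m) ArithmeticFunction.moebius_mul_coe_zeta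
  simp only [ArithmeticFunction.mul_apply, ArithmeticFunction.one_apply] at this
  rw [← this, ← Nat.sum_divisorsAntidiagonal (fun a b => (ArithmeticFunction.moebius a : ℤ))]
  apply Finset.sum_congr rfl
  intro x hx
  have : x.2 ≠ 0 := (Nat.snd_mem_divisors_of_mem_antidiagonal hx) |> (Nat.pos_of_mem_divisors ·|>.ne')
  simp [ArithmeticFunction.natCoe_apply, ArithmeticFunction.zeta_apply, this]
private lemma lemM (p : ℕ) (hp : p.Prime) (m : ℕ) (hm : m ≠ 0) :
    ∑ e ∈ m.divisors, (if ¬ p ∣ e ∧ ¬ p ∣ m / e then (ArithmeticFunction.moebius e : ℤ) else 0)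
      = if m = 1 then 1 else 0 := by
  by_cases hpm : p ∣ m
  · rw [if_neg (by rintro rfl; exact hp.ne_one (Nat.dvd_one.mp hpm))]
    · apply Finset.sum_eq_zero
      intro e he
      rw [if_neg]
      rintro ⟨h1, h2⟩
      have hed : e ∣ m := Nat.dvd_of_mem_divisors he
      have : p ∣ e * (m / e) := by rwa [Nat.mul_div_cancel' hed]
      rcases (hp.dvd_mul).1 this with h | h
      exacts [h1 h, h2 h]
  · rw [← sum_moeb m hm]
    apply Finset.sum_congr rfl
    intro e he
    rw [if_pos]
    exact ⟨fun h => hpm (h.trans (Nat.dvd_of_mem_divisors he)),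
      fun h => hpm (h.trans (Nat.div_dvd_of_dvd (Nat.dvd_of_mem_divisors he)))⟩
private lemma swap_div {M : Type*} [AddCommMonoid M] (d : ℕ) (hd : d ≠ 0) (F : ℕ → ℕ → M) :
    ∑ e ∈ d.divisors, ∑ k ∈ (d / e).divisors, F e k
      = ∑ k ∈ d.divisors, ∑ e ∈ (d / k).divisors, F e k := by
  have key : ∀ a b : ℕ, a ∣ d → b ∣ d / a → b ∣ d ∧ a ∣ d / b := by
    intro a b h1 h2
    have hab : a * b ∣ d := (Nat.dvd_div_iff_mul_dvd h1).1 h2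
    have hb : b ∣ d := (dvd_mul_left b a).trans hab
    exact ⟨hb, (Nat.dvd_div_iff_mul_dvd hb).2 (mul_comm a b ▸ hab)⟩
  rw [Finset.sum_sigma', Finset.sum_sigma']
  refine Finset.sum_nbij' (fun x => ⟨x.2, x.1⟩) (fun x => ⟨x.2, x.1⟩) ?_ ?_ (fun _ _ => rfl)
    (fun _ _ => rfl) (fun _ _ => rfl) <;>
  · rintro ⟨a, b⟩ hx
    simp only [Finset.mem_sigma, Nat.mem_divisors] at hx ⊢
    obtain ⟨⟨h1, -⟩, h2, h3⟩ := hx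
    obtain ⟨hb, ha⟩ := key a b h1 h2
    have hbpos : 0 < b := Nat.pos_of_ne_zero (fun h => hd (by simpa [h] using hb))
    exact ⟨⟨hb, hd⟩, ha, (Nat.div_pos (Nat.le_of_dvd (Nat.pos_of_ne_zero hd) hb) hbpos).ne'⟩

private lemma inversion (p : ℕ) (hp : p.Prime) (d : ℕ) (hd : d ≠ 0) (f g : ℕ → ℤ)
    (h : ∀ e ∈ d.divisors, ∑ k ∈ e.divisors.filter (fun k => ¬ p ∣ e / k), f k = g e) :
    f d = ∑ e ∈ d.divisors.filter (fun e => ¬ p ∣ e),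
      (ArithmeticFunction.moebius e : ℤ) * g (d / e) := by
  have hrw : ∀ e ∈ d.divisors, (if ¬ p ∣ e then (ArithmeticFunction.moebius e : ℤ) * g (d / e) else 0)
      = ∑ k ∈ (d / e).divisors, (if ¬ p ∣ e ∧ ¬ p ∣ (d / e) / k then (ArithmeticFunction.moebius e : ℤ) * f k else 0) := by
    intro e he
    have hde : d / e ∈ d.divisors :=
      Nat.mem_divisors.2 ⟨Nat.div_dvd_of_dvd (Nat.dvd_of_mem_divisors he), hd⟩
    by_cases hpe : p ∣ e
    · simp [hpe]
    · rw [if_pos hpe, ← h _ hde, Finset.sum_filter, Finset.mul_sum]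
      apply Finset.sum_congr rfl
      intro k hk
      by_cases h2 : p ∣ (d / e) / k <;> simp [h2, hpe]
  rw [Finset.sum_filter, Finset.sum_congr rfl hrw, swap_div d hd]
  have hin : ∀ k ∈ d.divisors,
      (∑ e ∈ (d / k).divisors, if ¬ p ∣ e ∧ ¬ p ∣ (d / e) / k then (ArithmeticFunction.moebius e : ℤ) * f k else 0)
        = (if d / k = 1 then 1 else 0) * f k := by
    intro k hk
    have hkd : k ∣ d := Nat.dvd_of_mem_divisors hk
    rw [← lemM p hp (d / k) ((Nat.div_pos (Nat.le_of_dvd (Nat.pos_of_ne_zero hd) hkd)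
        (Nat.pos_of_ne_zero (fun h0 => hd (by simpa [h0] using hkd)))).ne'), Finset.sum_mul]
    apply Finset.sum_congr rfl
    intro e he
    have hed : e ∣ d / k := Nat.dvd_of_mem_divisors he
    have : (d / e) / k = (d / k) / e := by
      rw [Nat.div_div_eq_div_mul, Nat.div_div_eq_div_mul, mul_comm]
    rw [this]
    by_cases h2 : ¬ p ∣ e ∧ ¬ p ∣ (d / k) / e <;> simp [h2, mul_comm]
  rw [Finset.sum_congr rfl hin]
  rw [Finset.sum_eq_single d]
  · simp [Nat.div_self (Nat.pos_of_ne_zero hd)]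
  · intro k hk hne
    have : d / k ≠ 1 := by
      intro h1
      exact hne (Nat.eq_of_dvd_of_div_eq_one (Nat.dvd_of_mem_divisors hk) h1 ▸ rfl)
    simp [this]
  · intro h; exact absurd (Nat.mem_divisors_self d hd) h


section FF
variable {p : ℕ} [Fact p.Prime] {F : Type*} [Field F] [Fintype F] [Algebra (ZMod p) F]
  [DecidableEq F] {d : ℕ}

private lemma charP_F : CharP F p := by
  rw [← Algebra.charP_iff (ZMod p) F p]; exact ZMod.charP p

private lemma aeval_frob (α : F) (h : (ZMod p)[X]) : (aeval α h) ^ p = aeval (α ^ p) h := by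
  haveI := charP_F (p := p) (F := F)
  have : (frobenius F p).comp (algebraMap (ZMod p) F) = algebraMap (ZMod p) F := by
    ext c
    simp [frobenius_def, ← map_pow, ZMod.pow_card]
  calc (aeval α h) ^ p = frobenius F p (aeval α h) := rfl
    _ = eval₂ ((frobenius F p).comp (algebraMap (ZMod p) F)) (frobenius F p α) h := by
        rw [aeval_def, hom_eval₂]
    _ = aeval (α ^ p) h := by rw [this, aeval_def, frobenius_def]

private lemma aeval_frob_pow (α : F) (h : (ZMod p)[X]) (i : ℕ) :
    (aeval α h) ^ p ^ i = aeval (α ^ p ^ i) h := by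
  induction i with
  | zero => simp
  | succ n ih => rw [pow_succ, pow_mul, ih, aeval_frob, ← pow_mul, ← pow_succ]

private lemma card_adjoin (α : F) :
    Nat.card (Algebra.adjoin (ZMod p) {α} : Subalgebra (ZMod p) F)
      = p ^ (minpoly (ZMod p) α).natDegree := by
  haveI : Fintype (Algebra.adjoin (ZMod p) {α} : Subalgebra (ZMod p) F) := Fintype.ofFinite _
  have hint : IsIntegral (ZMod p) α := Algebra.IsIntegral.isIntegral α
  rw [Nat.card_eq_fintype_card, @Module.card_eq_pow_finrank (ZMod p), ZMod.card,
    (Algebra.adjoin.powerBasis hint).finrank, Algebra.adjoin.powerBasis_dim]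

private lemma card_sol_le (e : ℕ) (he : 1 ≤ e) :
    (univ.filter fun x : F => x ^ p ^ e = x).card ≤ p ^ e := by
  have hp : 1 < p := (Fact.out : p.Prime).one_lt
  have hne : (X ^ p ^ e - X : F[X]) ≠ 0 :=
    FiniteField.X_pow_card_pow_sub_X_ne_zero F (by omega) hp
  have hsub : (univ.filter fun x : F => x ^ p ^ e = x) ⊆ (X ^ p ^ e - X : F[X]).roots.toFinset := by
    intro x hx
    simp only [mem_filter] at hx
    rw [Multiset.mem_toFinset, mem_roots hne]
    simp [sub_eq_zero, hx.2]
  calc (univ.filter fun x : F => x ^ p ^ e = x).card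
      ≤ (X ^ p ^ e - X : F[X]).roots.toFinset.card := Finset.card_le_card hsub
    _ ≤ Multiset.card (X ^ p ^ e - X : F[X]).roots := Multiset.toFinset_card_le _
    _ ≤ (X ^ p ^ e - X : F[X]).natDegree := card_roots' _
    _ = p ^ e := FiniteField.X_pow_card_pow_sub_X_natDegree_eq F (by omega) hp

private lemma deg_le (α : F) (e : ℕ) (he : 1 ≤ e) (hα : α ^ p ^ e = α) :
    (minpoly (ZMod p) α).natDegree ≤ e := by
  have hp : 1 < p := (Fact.out : p.Prime).one_lt
  have hfix : ∀ x : F, x ∈ Algebra.adjoin (ZMod p) {α} → x ^ p ^ e = x := by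
    intro x hx
    rw [Algebra.adjoin_singleton_eq_range_aeval, AlgHom.mem_range] at hx
    obtain ⟨h, rfl⟩ := hx
    rw [aeval_frob_pow, hα]
  haveI : Fintype (Algebra.adjoin (ZMod p) {α} : Subalgebra (ZMod p) F) := Fintype.ofFinite _
  have hinj : Function.Injective
      (fun x : (Algebra.adjoin (ZMod p) {α} : Subalgebra (ZMod p) F) =>
        (⟨(x : F), by simp only [mem_filter, mem_univ, true_and]; exact hfix _ x.2⟩ :
          {y : F // y ∈ univ.filter fun z : F => z ^ p ^ e = z})) :=
    by
    intro a b hab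
    have h2 : ((⟨(a : F), _⟩ : {y : F // y ∈ univ.filter fun z : F => z ^ p ^ e = z}) : F)
        = ((⟨(b : F), _⟩ : {y : F // y ∈ univ.filter fun z : F => z ^ p ^ e = z}) : F) :=
      congrArg Subtype.val hab
    exact Subtype.ext h2
  have h1 := Fintype.card_le_of_injective _ hinj
  rw [← Nat.card_eq_fintype_card, card_adjoin α, Fintype.card_coe] at h1
  exact (Nat.pow_le_pow_iff_right hp).1 (h1.trans (card_sol_le e he))

private lemma pow_deg (α : F) : α ^ p ^ (minpoly (ZMod p) α).natDegree = α := by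
  set K := (Algebra.adjoin (ZMod p) {α} : Subalgebra (ZMod p) F)
  haveI : Fintype K := Fintype.ofFinite _
  letI : Field K := Fintype.fieldOfDomain _
  have hx : α ∈ K := Algebra.self_mem_adjoin_singleton _ _
  have h1 := FiniteField.pow_card (⟨α, hx⟩ : K)
  rw [← Nat.card_eq_fintype_card, card_adjoin α] at h1
  have h2 := congrArg (Subtype.val) h1
  rwa [SubmonoidClass.coe_pow] at h2

private lemma deg_dvd_iff (α : F) (e : ℕ) :
    α ^ p ^ e = α ↔ (minpoly (ZMod p) α).natDegree ∣ e := by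
  set k := (minpoly (ZMod p) α).natDegree with hk
  have hkpos : 0 < k := minpoly.natDegree_pos (Algebra.IsIntegral.isIntegral α)
  have hmul : ∀ t : ℕ, α ^ p ^ (k * t) = α := by
    intro t
    induction t with
    | zero => simp
    | succ n ih => rw [Nat.mul_succ, pow_add, pow_mul, ih, pow_deg]
  constructor
  · intro hα
    have hr : α ^ p ^ (e % k) = α := by
      calc α ^ p ^ (e % k) = (α ^ p ^ (k * (e / k))) ^ p ^ (e % k) := by rw [hmul]
        _ = α ^ p ^ (k * (e / k) + e % k) := by rw [← pow_mul, ← pow_add]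
        _ = α ^ p ^ e := by rw [Nat.div_add_mod e k]
        _ = α := hα
    rcases Nat.eq_zero_or_pos (e % k) with h0 | h0
    · exact Nat.dvd_of_mod_eq_zero h0
    · have := deg_le α (e % k) h0 hr
      exact absurd (Nat.mod_lt e hkpos) (not_lt.2 this)
  · rintro ⟨t, rfl⟩
    exact hmul t

private lemma frob_pow_inj (i : ℕ) : Function.Injective (fun x : F => x ^ p ^ i) := by
  haveI : CharP F p := by rw [← Algebra.charP_iff (ZMod p) F p]; exact ZMod.charP p
  intro a b hab
  simp only [← iterate_frobenius] at hab
  exact Function.Injective.iterate (frobenius_inj F p) i hab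

private lemma pow_distinct (α : F) {i j : ℕ} (hi : i < (minpoly (ZMod p) α).natDegree)
    (hj : j < (minpoly (ZMod p) α).natDegree) (hij : α ^ p ^ i = α ^ p ^ j) : i = j := by
  wlog h : i ≤ j generalizing i j
  · exact (this hj hi hij.symm (by omega)).symm
  have : α ^ p ^ (j - i) = α := by
    apply frob_pow_inj (p := p) i
    show (α ^ p ^ (j - i)) ^ p ^ i = α ^ p ^ i
    rw [← pow_mul, ← pow_add, Nat.sub_add_cancel h]
    exact hij.symm
  rw [deg_dvd_iff] at this
  rcases Nat.eq_zero_of_dvd_of_lt this (by omega) |>.symm with h0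
  · omega

private lemma CNT (hF : Fintype.card F = p ^ d) (hd : 1 ≤ d) (h : F[X]) (hne : h ≠ 0)
    (hdvd : h ∣ X ^ p ^ d - X) :
    (univ.filter fun α : F => eval α h = 0).card = h.natDegree := by
  have hp : 1 < p := (Fact.out : p.Prime).one_lt
  have hbigne : (X ^ p ^ d - X : F[X]) ≠ 0 :=
    FiniteField.X_pow_card_pow_sub_X_ne_zero F (by omega) hp
  have hsp : Splits (X ^ p ^ d - X : F[X]) := by
    rw [splits_iff_card_roots, ← hF, FiniteField.roots_X_pow_card_sub_X, hF,
      FiniteField.X_pow_card_pow_sub_X_natDegree_eq F (by omega) hp]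
    simp [Finset.card_univ, hF]
  haveI : CharP F p := by rw [← Algebra.charP_iff (ZMod p) F p]; exact ZMod.charP p
  have hsep : h.Separable :=
    (galois_poly_separable p (p ^ d) (dvd_pow_self p (by omega))).of_dvd hdvd
  have hsph : Splits h := hsp.of_dvd hbigne hdvd
  have hnodup : h.roots.Nodup := nodup_roots hsep
  have hcount : Multiset.card h.roots = h.natDegree := (splits_iff_card_roots.mp hsph)
  have : (univ.filter fun α : F => eval α h = 0) = h.roots.toFinset := by
    ext x
    simp [Multiset.mem_toFinset, mem_roots hne]
  rw [this, Multiset.toFinset_card_of_nodup hnodup, hcount]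

private lemma divd_dvd (e : ℕ) (hed : e ∣ d) : (X ^ p ^ e - X : F[X]) ∣ X ^ p ^ d - X := by
  obtain ⟨m, rfl⟩ := hed
  induction m with
  | zero => simp
  | succ n ih =>
      have h1 : (X ^ p ^ (e * n) - X : F[X]) ∣ (X ^ p ^ (e * n)) ^ p ^ e - X ^ p ^ e :=
        sub_dvd_pow_sub_pow _ _ _
      have h2 : ((X ^ p ^ (e * n)) ^ p ^ e - X ^ p ^ e : F[X]) = X ^ p ^ (e * (n + 1)) - X ^ p ^ e := by
        rw [← pow_mul, ← pow_add, ← Nat.mul_succ]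
      have h3 : (X ^ p ^ (e * (n + 1)) - X : F[X])
          = (X ^ p ^ (e * (n + 1)) - X ^ p ^ e) + (X ^ p ^ e - X) := by ring
      rw [h3]
      exact dvd_add (ih.trans (h2 ▸ h1)) dvd_rfl

private noncomputable def gl (p : ℕ) (F : Type*) [Field F] (e : ℕ) : F[X] := ∑ i ∈ range e, X ^ p ^ i

private lemma gl_pow_sub (e : ℕ) :
    haveI : CharP F p := by rw [← Algebra.charP_iff (ZMod p) F p]; exact ZMod.charP p
    (gl p F e) ^ p - gl p F e = X ^ p ^ e - X := by
  haveI : CharP F p := by rw [← Algebra.charP_iff (ZMod p) F p]; exact ZMod.charP p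
  have hchar : CharP F[X] p := Polynomial.instCharP p  -- guess
  have h1 : (gl p F e) ^ p = ∑ i ∈ range e, X ^ p ^ (i + 1) := by
    rw [gl, sum_pow_char]
    exact Finset.sum_congr rfl fun i _ => by rw [← pow_mul, ← pow_succ]
  rw [h1, gl, ← Finset.sum_sub_distrib, Finset.sum_range_sub (fun i => (X : F[X]) ^ p ^ i)]
  simp

private lemma gl_dvd (e : ℕ) : (gl p F e : F[X]) ∣ X ^ p ^ e - X := by
  haveI : CharP F p := by rw [← Algebra.charP_iff (ZMod p) F p]; exact ZMod.charP p
  rw [← gl_pow_sub (p := p) e]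
  exact dvd_sub (dvd_pow_self _ ((Fact.out : p.Prime).ne_zero)) dvd_rfl

private lemma gl_natDegree (e : ℕ) (he : 1 ≤ e) : (gl p F e).natDegree = p ^ (e - 1) := by
  have hp : 1 < p := (Fact.out : p.Prime).one_lt
  obtain ⟨n, rfl⟩ : ∃ n, e = n + 1 := ⟨e - 1, by omega⟩
  rw [gl, Finset.sum_range_succ]
  rw [natDegree_add_eq_right_of_natDegree_lt, natDegree_X_pow]
  · simp
  · rw [natDegree_X_pow]
    calc (∑ i ∈ range n, (X : F[X]) ^ p ^ i).natDegree
        ≤ p ^ n - 1 := natDegree_sum_le_of_forall_le _ _ fun i hi => by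
          rw [natDegree_X_pow]
          have : p ^ i < p ^ n := Nat.pow_lt_pow_right hp (mem_range.1 hi)
          omega
      _ < p ^ n := by have := Nat.one_le_iff_ne_zero.2 (pow_ne_zero n (by omega) : p ^ n ≠ 0); omega

private lemma gl_ne_zero (e : ℕ) (he : 1 ≤ e) : (gl p F e : F[X]) ≠ 0 := by
  intro h0
  have := gl_natDegree (p := p) (F := F) e he
  rw [h0, natDegree_zero] at this
  exact (pow_ne_zero (e - 1) ((Fact.out : p.Prime).ne_zero : p ≠ 0)) this.symm

private lemma eval_gl (e : ℕ) (α : F) : eval α (gl p F e) = ∑ i ∈ range e, α ^ p ^ i := by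
  rw [gl, eval_finset_sum]
  exact Finset.sum_congr rfl fun i _ => by rw [eval_pow, eval_X]


private noncomputable def sσ (p : ℕ) {F : Type*} [Field F] [Algebra (ZMod p) F] (α : F) : F :=
  ∑ i ∈ range (minpoly (ZMod p) α).natDegree, α ^ p ^ i

private noncomputable def Af (p : ℕ) (F : Type*) [Field F] [Fintype F] [Algebra (ZMod p) F]
    [DecidableEq F] (k : ℕ) : Finset F :=
  univ.filter fun α : F => (minpoly (ZMod p) α).natDegree = k

private noncomputable def Bf (p : ℕ) (F : Type*) [Field F] [Fintype F] [Algebra (ZMod p) F]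
    [DecidableEq F] (k : ℕ) : Finset F :=
  univ.filter fun α : F => (minpoly (ZMod p) α).natDegree = k ∧ sσ p α ≠ 0

private noncomputable def Cf (p : ℕ) (F : Type*) [Field F] [Fintype F] [Algebra (ZMod p) F]
    [DecidableEq F] (k : ℕ) : Finset F :=
  univ.filter fun α : F => (minpoly (ZMod p) α).natDegree = k ∧ sσ p α = 0

private lemma ABC (k : ℕ) : (Af p F k).card = (Bf p F k).card + (Cf p F k).card := by
  rw [Af, Bf, Cf, ← Finset.filter_filter, ← Finset.filter_filter]
  have h := Finset.card_filter_add_card_filter_not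
    (s := univ.filter fun α : F => (minpoly (ZMod p) α).natDegree = k)
    (p := fun α => sσ p α ≠ 0)
  simp only [not_not] at h
  exact h.symm

private lemma period_sum (α : F) (e : ℕ) (he : (minpoly (ZMod p) α).natDegree ∣ e) :
    ∑ i ∈ range e, α ^ p ^ i = (e / (minpoly (ZMod p) α).natDegree : ℕ) • sσ p α := by
  have hper : ∀ n : ℕ, α ^ p ^ ((minpoly (ZMod p) α).natDegree * n) = α :=
    fun n => (deg_dvd_iff α _).2 ⟨n, rfl⟩
  have hkpos : 0 < (minpoly (ZMod p) α).natDegree :=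
    minpoly.natDegree_pos (Algebra.IsIntegral.isIntegral α)
  obtain ⟨m, rfl⟩ := he
  rw [Nat.mul_div_cancel_left m hkpos]
  induction m with
  | zero => simp
  | succ n ih =>
      rw [Nat.mul_succ, Finset.sum_range_add, ih, succ_nsmul]
      congr 1
      rw [sσ]
      apply Finset.sum_congr rfl
      intro i hi
      rw [pow_add, pow_mul, hper n]

private lemma partA (hF : Fintype.card F = p ^ d) (hd : 1 ≤ d) (e : ℕ) (hed : e ∣ d)
    (he : 1 ≤ e) : ∑ k ∈ e.divisors, (Af p F k).card = p ^ e := by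
  have hp : 1 < p := (Fact.out : p.Prime).one_lt
  have hne : (X ^ p ^ e - X : F[X]) ≠ 0 :=
    FiniteField.X_pow_card_pow_sub_X_ne_zero F (by omega) hp
  have hSet : (univ.filter fun α : F => eval α ((X : F[X]) ^ p ^ e - X) = 0)
      = (univ.filter fun α : F => α ^ p ^ e = α) := by
    ext α; simp [sub_eq_zero]
  have hS : (univ.filter fun α : F => α ^ p ^ e = α).card = p ^ e := by
    rw [← hSet, CNT hF hd (X ^ p ^ e - X) hne (divd_dvd e hed),
      FiniteField.X_pow_card_pow_sub_X_natDegree_eq F (by omega) hp]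
  rw [← hS, Finset.card_eq_sum_card_fiberwise
    (f := fun α : F => (minpoly (ZMod p) α).natDegree) (t := e.divisors)]
  · apply Finset.sum_congr rfl
    intro k hk
    congr 1
    rw [Af, Finset.filter_filter]
    ext α
    simp only [mem_filter, mem_univ, true_and]
    constructor
    · intro h
      exact ⟨(deg_dvd_iff α e).2 (h ▸ Nat.dvd_of_mem_divisors hk), h⟩
    · exact fun h => h.2
  · intro α hα
    simp only [Finset.mem_coe, mem_filter] at hα
    exact Nat.mem_divisors.2 ⟨(deg_dvd_iff α e).1 hα.2, by omega⟩

private lemma partC (hF : Fintype.card F = p ^ d) (hd : 1 ≤ d) (e : ℕ) (hed : e ∣ d)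
    (he : 1 ≤ e) :
    ∑ k ∈ e.divisors, (if p ∣ e / k then (Af p F k).card else (Cf p F k).card) = p ^ (e - 1) := by
  haveI : CharP F p := by rw [← Algebra.charP_iff (ZMod p) F p]; exact ZMod.charP p
  have hS : (univ.filter fun α : F => eval α (gl p F e) = 0).card = p ^ (e - 1) := by
    rw [CNT hF hd (gl p F e) (gl_ne_zero e he) ((gl_dvd e).trans (divd_dvd e hed)),
      gl_natDegree e he]
  have hfix : ∀ α : F, eval α (gl p F e) = 0 → α ^ p ^ e = α := by
    intro α hα
    have h2 := congrArg (eval α) (gl_pow_sub (p := p) (F := F) e)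
    simp only [eval_sub, eval_pow, eval_X, hα] at h2
    rw [sub_zero, zero_pow (Fact.out : p.Prime).ne_zero] at h2
    exact (sub_eq_zero.mp h2.symm)
  rw [← hS, Finset.card_eq_sum_card_fiberwise
    (f := fun α : F => (minpoly (ZMod p) α).natDegree) (t := e.divisors)]
  · apply Finset.sum_congr rfl
    intro k hk
    have hkd : k ∣ e := Nat.dvd_of_mem_divisors hk
    have hkpos : 0 < k := Nat.pos_of_mem_divisors hk
    have key : ∀ α : F, (minpoly (ZMod p) α).natDegree = k →
        eval α (gl p F e) = ((e / k : ℕ) : F) * sσ p α := by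
      intro α hdeg
      rw [eval_gl, period_sum α e (hdeg ▸ hkd), hdeg, nsmul_eq_mul]
    by_cases hpk : p ∣ e / k
    · rw [if_pos hpk]
      congr 1
      rw [Af, Finset.filter_filter]
      ext α
      simp only [mem_filter, mem_univ, true_and]
      constructor
      · intro h
        refine ⟨?_, h⟩
        rw [key α h, (CharP.cast_eq_zero_iff F p _).2 hpk, zero_mul]
      · exact fun h => h.2
    · rw [if_neg hpk]
      congr 1
      rw [Cf, Finset.filter_filter]
      ext α
      simp only [mem_filter, mem_univ, true_and]
      constructor
      · rintro ⟨h1, h2⟩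
        exact ⟨by rw [key α h1, h2, mul_zero], h1⟩
      · rintro ⟨h1, h2⟩
        refine ⟨h2, ?_⟩
        rw [key α h2] at h1
        rcases mul_eq_zero.1 h1 with h | h
        · exact absurd ((CharP.cast_eq_zero_iff F p _).1 h) hpk
        · exact h
  · intro α hα
    simp only [Finset.mem_coe, mem_filter] at hα
    exact Nat.mem_divisors.2 ⟨(deg_dvd_iff α e).1 (hfix α hα.2), by omega⟩


private lemma minpoly_dvd_big (hF : Fintype.card F = p ^ d) (α : F) :
    minpoly (ZMod p) α ∣ (X ^ p ^ d - X : (ZMod p)[X]) := by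
  apply minpoly.dvd
  rw [map_sub, map_pow, aeval_X]
  rw [sub_eq_zero]
  conv_rhs => rw [← FiniteField.pow_card α]
  rw [hF]

private lemma map_dvd_big (hF : Fintype.card F = p ^ d) (α : F) :
    (minpoly (ZMod p) α).map (algebraMap (ZMod p) F) ∣ (X ^ p ^ d - X : F[X]) := by
  have := Polynomial.map_dvd (algebraMap (ZMod p) F) (minpoly_dvd_big hF α)
  rwa [Polynomial.map_sub, Polynomial.map_pow, Polynomial.map_X] at this

private lemma roots_eq_orbit (hF : Fintype.card F = p ^ d) (hd : 1 ≤ d) (α : F)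
    (hdeg : (minpoly (ZMod p) α).natDegree = d) :
    (univ.filter fun β : F => eval β ((minpoly (ZMod p) α).map (algebraMap (ZMod p) F)) = 0)
      = (range d).image (fun i => α ^ p ^ i) := by
  have hint : IsIntegral (ZMod p) α := Algebra.IsIntegral.isIntegral α
  have hm : (minpoly (ZMod p) α).Monic := minpoly.monic hint
  set mp := (minpoly (ZMod p) α).map (algebraMap (ZMod p) F) with hmp
  have hmpne : mp ≠ 0 := (hm.map _).ne_zero
  have hcard : (univ.filter fun β : F => eval β mp = 0).card = d := by
    rw [CNT hF hd mp hmpne (map_dvd_big hF α), hmp,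
      (minpoly (ZMod p) α).natDegree_map_eq_of_injective (algebraMap (ZMod p) F).injective, hdeg]
  have himcard : ((range d).image (fun i => α ^ p ^ i)).card = d := by
    rw [Finset.card_image_of_injOn, card_range]
    intro i hi j hj hij
    exact pow_distinct α (hdeg ▸ mem_range.1 hi) (hdeg ▸ mem_range.1 hj) hij
  symm
  apply Finset.eq_of_subset_of_card_le
  · intro x hx
    simp only [mem_image, mem_range] at hx
    obtain ⟨i, hi, rfl⟩ := hx
    simp only [mem_filter, mem_univ, true_and]
    rw [hmp, eval_map, ← aeval_def, ← aeval_frob_pow α _ i, minpoly.aeval,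
      zero_pow (pow_ne_zero i (Fact.out : p.Prime).ne_zero)]
  · rw [hcard, himcard]

private lemma coeff_link (hF : Fintype.card F = p ^ d) (hd : 1 ≤ d) (α : F)
    (hdeg : (minpoly (ZMod p) α).natDegree = d) :
    algebraMap (ZMod p) F ((minpoly (ZMod p) α).coeff (d - 1)) = - sσ p α := by
  have hint : IsIntegral (ZMod p) α := Algebra.IsIntegral.isIntegral α
  have hm : (minpoly (ZMod p) α).Monic := minpoly.monic hint
  set mp := (minpoly (ZMod p) α).map (algebraMap (ZMod p) F) with hmp
  have hmpne : mp ≠ 0 := (hm.map _).ne_zero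
  have hdegmp : mp.natDegree = d := by
    rw [hmp, (minpoly (ZMod p) α).natDegree_map_eq_of_injective
      (algebraMap (ZMod p) F).injective, hdeg]
  have hp : 1 < p := (Fact.out : p.Prime).one_lt
  have hbigne : (X ^ p ^ d - X : F[X]) ≠ 0 :=
    FiniteField.X_pow_card_pow_sub_X_ne_zero F (by omega) hp
  have hsp : Splits (X ^ p ^ d - X : F[X]) := by
    rw [splits_iff_card_roots, ← hF, FiniteField.roots_X_pow_card_sub_X, hF,
      FiniteField.X_pow_card_pow_sub_X_natDegree_eq F (by omega) hp]
    simp [Finset.card_univ, hF]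
  haveI : CharP F p := by rw [← Algebra.charP_iff (ZMod p) F p]; exact ZMod.charP p
  have hsep : mp.Separable :=
    (galois_poly_separable p (p ^ d) (dvd_pow_self p (by omega))).of_dvd (map_dvd_big hF α)
  have hsplit : Splits mp := hsp.of_dvd hbigne (map_dvd_big hF α)
  have hnodup : mp.roots.Nodup := nodup_roots hsep
  -- sum of roots
  have hnext : mp.nextCoeff = - mp.roots.sum :=
    hsplit.nextCoeff_eq_neg_sum_roots_of_monic (hm.map _)
  have htf : mp.roots.toFinset = (range d).image (fun i => α ^ p ^ i) := by
    rw [← roots_eq_orbit hF hd α hdeg]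
    ext x
    simp [Multiset.mem_toFinset, mem_roots hmpne, ← hmp]
  have hsum : mp.roots.sum = sσ p α := by
    have h1 : mp.roots.sum = ∑ x ∈ mp.roots.toFinset, x := by
      rw [Finset.sum_eq_multiset_sum]
      simp [Multiset.toFinset_val, Multiset.dedup_eq_self.mpr hnodup]
    rw [h1, htf, Finset.sum_image (fun i hi j hj hij =>
      pow_distinct α (hdeg ▸ mem_range.1 hi) (hdeg ▸ mem_range.1 hj) hij), sσ, hdeg]
  have hnext2 : mp.nextCoeff = algebraMap (ZMod p) F ((minpoly (ZMod p) α).nextCoeff) :=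
    nextCoeff_map (algebraMap (ZMod p) F).injective _
  have hnc : (minpoly (ZMod p) α).nextCoeff = (minpoly (ZMod p) α).coeff (d - 1) := by
    rw [nextCoeff_of_natDegree_pos (by omega), hdeg]
  rw [← hnc, ← hnext2, hnext, hsum]


private lemma sσ_ne_iff (hF : Fintype.card F = p ^ d) (hd : 1 ≤ d) (α : F)
    (hdeg : (minpoly (ZMod p) α).natDegree = d) :
    sσ p α ≠ 0 ↔ (minpoly (ZMod p) α).coeff (d - 1) ≠ 0 := by
  rw [ne_eq, ← neg_eq_zero, ← coeff_link hF hd α hdeg]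
  rw [map_eq_zero_iff _ (algebraMap (ZMod p) F).injective]

private lemma main_count (hF : Fintype.card F = p ^ d) (hd : 1 ≤ d) :
    (Bf p F d).card = d * Nat.card {m : (ZMod p)[X] //
      m.Monic ∧ Irreducible m ∧ m.natDegree = d ∧ m.coeff (d - 1) ≠ 0} := by
  classical
  set T' := (Bf p F d).image (fun α => minpoly (ZMod p) α) with hT'
  have hBf_mem : ∀ α : F, α ∈ Bf p F d ↔
      (minpoly (ZMod p) α).natDegree = d ∧ sσ p α ≠ 0 := by
    intro α; simp [Bf]
  have hchar : ∀ m : (ZMod p)[X],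
      (m.Monic ∧ Irreducible m ∧ m.natDegree = d ∧ m.coeff (d - 1) ≠ 0) ↔ m ∈ T' := by
    intro m
    constructor
    · rintro ⟨hmon, hirr, hdegm, hcoeff⟩
      haveI : Fact (Irreducible m) := ⟨hirr⟩
      have hm0 : m ≠ 0 := hmon.ne_zero
      let K := AdjoinRoot m
      let pb : PowerBasis (ZMod p) K := AdjoinRoot.powerBasis hm0
      haveI : Fintype K := Module.fintypeOfFintype pb.basis
      have hcardK : Fintype.card K = p ^ d := by
        rw [@Module.card_eq_pow_finrank (ZMod p), ZMod.card, pb.finrank]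
        have hdim : pb.dim = m.natDegree := rfl
        rw [hdim, hdegm]
      let equiv : K ≃ₐ[ZMod p] F := FiniteField.algEquivOfCardEq p (hcardK.trans hF.symm)
      set α := equiv (AdjoinRoot.root m) with hα
      have hminα : minpoly (ZMod p) α = m := by
        rw [hα, minpoly.algEquiv_eq, AdjoinRoot.minpoly_root hm0, hmon.leadingCoeff]
        simp
      have hdegα : (minpoly (ZMod p) α).natDegree = d := by rw [hminα, hdegm]
      refine Finset.mem_image.2 ⟨α, ?_, hminα⟩
      rw [hBf_mem]
      refine ⟨hdegα, ?_⟩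
      rw [sσ_ne_iff hF hd α hdegα, hminα]
      exact hcoeff
    · intro hm
      obtain ⟨α, hαB, rfl⟩ := Finset.mem_image.1 hm
      rw [hBf_mem] at hαB
      obtain ⟨hdegα, hsα⟩ := hαB
      have hint : IsIntegral (ZMod p) α := Algebra.IsIntegral.isIntegral α
      exact ⟨minpoly.monic hint, minpoly.irreducible hint, hdegα,
        (sσ_ne_iff hF hd α hdegα).1 hsα⟩
  have hcardT : Nat.card {m : (ZMod p)[X] //
      m.Monic ∧ Irreducible m ∧ m.natDegree = d ∧ m.coeff (d - 1) ≠ 0} = T'.card := by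
    rw [Nat.card_congr (Equiv.subtypeEquivRight hchar), Nat.card_eq_fintype_card,
      Fintype.card_coe]
  have hfib : (Bf p F d).card = ∑ m ∈ T', d := by
    rw [Finset.card_eq_sum_card_fiberwise (f := fun α : F => minpoly (ZMod p) α) (t := T')
      (fun α hα => Finset.mem_image_of_mem _ hα)]
    apply Finset.sum_congr rfl
    intro m hm
    have hfacts := (hchar m).2 hm
    obtain ⟨hmon, hirr, hdegm, hcoeff⟩ := hfacts
    have hEq : (Bf p F d).filter (fun α => minpoly (ZMod p) α = m)
        = univ.filter (fun β : F => eval β (m.map (algebraMap (ZMod p) F)) = 0) := by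
      ext β
      simp only [mem_filter, mem_univ, true_and, hBf_mem]
      constructor
      · rintro ⟨⟨h1, h2⟩, h3⟩
        rw [eval_map, ← aeval_def, ← h3, minpoly.aeval]
      · intro hβ
        rw [eval_map, ← aeval_def] at hβ
        have hmin : minpoly (ZMod p) β = m := (minpoly.eq_of_irreducible_of_monic hirr hβ hmon).symm
        have hdegβ : (minpoly (ZMod p) β).natDegree = d := by rw [hmin, hdegm]
        refine ⟨⟨hdegβ, ?_⟩, hmin⟩
        rw [sσ_ne_iff hF hd β hdegβ, hmin]
        exact hcoeff
    rw [hEq]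
    have hmp_dvd : m.map (algebraMap (ZMod p) F) ∣ (X ^ p ^ d - X : F[X]) := by
      obtain ⟨α, hαB, rfl⟩ := Finset.mem_image.1 hm
      exact map_dvd_big hF α
    rw [CNT hF hd _ ((hmon.map _).ne_zero) hmp_dvd,
      m.natDegree_map_eq_of_injective (algebraMap (ZMod p) F).injective, hdegm]
  rw [hfib, Finset.sum_const, smul_eq_mul, hcardT, mul_comm]
end FF
theorem stmt6 (p : ℕ) [Fact p.Prime] (d : ℕ) (hd : 1 ≤ d) :
    (p * d : ℤ) *
        Nat.card {m : Polynomial (ZMod p) //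
          m.Monic ∧ Irreducible m ∧ m.natDegree = d ∧ m.coeff (d - 1) ≠ 0} =
      (p - 1 : ℤ) *
        ∑ k ∈ d.divisors.filter (fun k => ¬ p ∣ k),
          (ArithmeticFunction.moebius k : ℤ) * (p : ℤ) ^ (d / k) := by
  classical
  have hp : p.Prime := Fact.out
  set F := GaloisField p d with hFdef
  haveI : Fintype F := Fintype.ofFinite F
  have hF : Fintype.card F = p ^ d := by
    rw [← Nat.card_eq_fintype_card, hFdef]
    exact GaloisField.card p d (by omega)
  have hkey : ∀ e ∈ d.divisors, ∑ k ∈ e.divisors.filter (fun k => ¬ p ∣ e / k),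
      ((Bf p F k).card : ℤ) = (p : ℤ) ^ e - (p : ℤ) ^ (e - 1) := by
    intro e he
    have hed := Nat.dvd_of_mem_divisors he
    have he1 : 1 ≤ e := Nat.pos_of_mem_divisors he
    have hA := partA hF hd e hed he1
    have hC := partC hF hd e hed he1
    have hstep : ∑ k ∈ e.divisors.filter (fun k => ¬ p ∣ e / k), ((Bf p F k).card : ℤ)
        = ∑ k ∈ e.divisors, (((Af p F k).card : ℤ)
            - (if p ∣ e / k then ((Af p F k).card : ℤ) else ((Cf p F k).card : ℤ))) := by
      rw [Finset.sum_filter]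
      apply Finset.sum_congr rfl
      intro k hk
      by_cases h2 : p ∣ e / k
      · rw [if_neg (by simpa using h2), if_pos h2]
        ring
      · rw [if_pos (by simpa using h2), if_neg h2, ABC (p := p) (F := F) k]
        push_cast
        ring
    rw [hstep, Finset.sum_sub_distrib]
    have hAz : ∑ k ∈ e.divisors, ((Af p F k).card : ℤ) = (p : ℤ) ^ e := by
      exact_mod_cast congrArg (Nat.cast (R := ℤ)) hA
    have hCz : ∑ k ∈ e.divisors,
        (if p ∣ e / k then ((Af p F k).card : ℤ) else ((Cf p F k).card : ℤ))
          = (p : ℤ) ^ (e - 1) := by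
      have h3 : (∑ k ∈ e.divisors,
          (if p ∣ e / k then ((Af p F k).card : ℤ) else ((Cf p F k).card : ℤ)))
          = ((∑ k ∈ e.divisors,
              if p ∣ e / k then (Af p F k).card else (Cf p F k).card : ℕ) : ℤ) := by
        push_cast
        apply Finset.sum_congr rfl
        intro k hk
        by_cases h2 : p ∣ e / k <;> simp [h2]
      rw [h3, hC]
      push_cast
      ring
    rw [hAz, hCz]
  have hinv := inversion p hp d (by omega) (fun k => ((Bf p F k).card : ℤ))
      (fun e => (p : ℤ) ^ e - (p : ℤ) ^ (e - 1)) hkey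
  have hmc := main_count (p := p) (F := F) hF hd
  have hdN : (d : ℤ) * (Nat.card {m : Polynomial (ZMod p) //
      m.Monic ∧ Irreducible m ∧ m.natDegree = d ∧ m.coeff (d - 1) ≠ 0} : ℤ)
      = ((Bf p F d).card : ℤ) := by
    exact_mod_cast (congrArg (Nat.cast (R := ℤ)) hmc).symm
  beta_reduce at hinv
  rw [mul_assoc, hdN, hinv, Finset.mul_sum, Finset.mul_sum]
  apply Finset.sum_congr rfl
  intro e he'
  simp only [Finset.mem_filter, Nat.mem_divisors] at he'
  have hde : 1 ≤ d / e :=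
    Nat.div_pos (Nat.le_of_dvd (by omega) he'.1.1)
      (Nat.pos_of_ne_zero (fun h0 => he'.1.2 (by rw [h0] at he'; exact Nat.eq_zero_of_zero_dvd he'.1.1)))
  have h1 : (p : ℤ) * (p : ℤ) ^ (d / e - 1) = (p : ℤ) ^ (d / e) := by
    rw [← pow_succ']
    congr 1
    omega
  linear_combination ((ArithmeticFunction.moebius e : ℤ)) * ((p : ℤ) ^ (d / e)) -
    (ArithmeticFunction.moebius e : ℤ) * h1
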